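/- Let L be a sectionally complemented modular lattice and let a, b, c be elements such that (a∨b) ∧ (b∨c) = b. If a ∼ b and b ∼ c, then a ∼ c. -/
import Mathlib

/-- Refine a perspectivity witness to one meeting both elements at ⊥. -/
lemma refine_axis {L : Type*} [Lattice L] [OrderBot L] [IsModularLattice L]
    (hsc : ∀ a b : L, a ≤ b → ∃ x : L, a ⊓ x = ⊥ ∧ a ⊔ x = b)
    (x y : L) (hxy : ∃ s : L, x ⊓ s = y ⊓ s ∧ x ⊔ s = y ⊔ s) :
    ∃ s : L, x ⊓ s = ⊥ ∧ y ⊓ s = ⊥ ∧ x ⊔ s = x ⊔ y ∧ y ⊔ s = x ⊔ y := by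
  obtain ⟨s, h1, h2⟩ := hxy
  set s' := s ⊓ (x ⊔ y) with hs'
  have hxs : x ⊔ y ≤ x ⊔ s := sup_le le_sup_left (h2 ▸ le_sup_left)
  have hys : x ⊔ y ≤ y ⊔ s := h2 ▸ hxs
  have hx' : x ⊔ s' = x ⊔ y := by
    rw [hs', ← sup_inf_assoc_of_le s le_sup_left, inf_eq_right.2 hxs]
  have hy' : y ⊔ s' = x ⊔ y := by
    rw [hs', ← sup_inf_assoc_of_le s le_sup_right, inf_eq_right.2 hys]
  have hxinf : x ⊓ s' = x ⊓ s := by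
    rw [hs', ← inf_assoc, inf_comm x s, inf_assoc, inf_sup_self, inf_comm]
  have hyinf : y ⊓ s' = x ⊓ s' := by
    rw [hxinf, hs', ← inf_assoc, inf_comm y s, inf_assoc, inf_eq_left.2 (le_sup_right : y ≤ x ⊔ y), inf_comm, h1]
  obtain ⟨t, ht1, ht2⟩ := hsc (x ⊓ s') s' inf_le_right
  have hts' : t ≤ s' := le_trans le_sup_right ht2.le
  refine ⟨t, ?_, ?_, ?_, ?_⟩
  · have hle : x ⊓ t ≤ (x ⊓ s') ⊓ t :=
      le_inf (le_inf inf_le_left (inf_le_right.trans hts')) inf_le_right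
    exact le_bot_iff.mp (ht1 ▸ hle)
  · have hle : y ⊓ t ≤ (x ⊓ s') ⊓ t :=
      le_inf (hyinf ▸ le_inf inf_le_left (inf_le_right.trans hts')) inf_le_right
    exact le_bot_iff.mp (ht1 ▸ hle)
  · calc x ⊔ t = (x ⊔ x ⊓ s') ⊔ t := by rw [sup_inf_self]
    _ = x ⊔ (x ⊓ s' ⊔ t) := sup_assoc x _ t
    _ = x ⊔ s' := by rw [ht2]
    _ = x ⊔ y := hx'
  · have hxy' : x ⊓ s' ≤ y := by rw [← hyinf]; exact inf_le_left
    calc y ⊔ t = (y ⊔ x ⊓ s') ⊔ t := by rw [sup_eq_left.2 hxy']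
    _ = y ⊔ (x ⊓ s' ⊔ t) := sup_assoc y _ t
    _ = y ⊔ s' := by rw [ht2]
    _ = x ⊔ y := hy'

theorem stmt18 (L : Type*) [Lattice L] [OrderBot L] [IsModularLattice L]
    (hsc : ∀ a b : L, a ≤ b → ∃ x : L, a ⊓ x = ⊥ ∧ a ⊔ x = b)
    (a b c : L) (h : (a ⊔ b) ⊓ (b ⊔ c) = b)
    (hab : ∃ s : L, a ⊓ s = b ⊓ s ∧ a ⊔ s = b ⊔ s)
    (hbc : ∃ s : L, b ⊓ s = c ⊓ s ∧ b ⊔ s = c ⊔ s) :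
    ∃ s : L, a ⊓ s = c ⊓ s ∧ a ⊔ s = c ⊔ s := by
  obtain ⟨s, has, hbs, hasup, hbsup⟩ := refine_axis hsc a b hab
  obtain ⟨t, hbt, hct, hbtsup, hctsup⟩ := refine_axis hsc b c hbc
  have hsab : s ≤ a ⊔ b := hasup ▸ le_sup_right
  have htbc : t ≤ b ⊔ c := hbtsup ▸ le_sup_right
  have key1 : (s ⊔ t) ⊓ (a ⊔ b) = s := by
    rw [sup_inf_assoc_of_le t hsab]
    have h1 : t ⊓ (a ⊔ b) ≤ (a ⊔ b) ⊓ (b ⊔ c) :=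
      le_inf inf_le_right (inf_le_left.trans htbc)
    rw [h] at h1
    have h2 : t ⊓ (a ⊔ b) = ⊥ := le_bot_iff.mp (hbt ▸ le_inf h1 inf_le_left)
    rw [h2, sup_bot_eq]
  have key2 : (s ⊔ t) ⊓ (b ⊔ c) = t := by
    rw [sup_comm, sup_inf_assoc_of_le s htbc]
    have h1 : s ⊓ (b ⊔ c) ≤ (a ⊔ b) ⊓ (b ⊔ c) :=
      le_inf (inf_le_left.trans hsab) inf_le_right
    rw [h] at h1
    have h2 : s ⊓ (b ⊔ c) = ⊥ := le_bot_iff.mp (hbs ▸ le_inf h1 inf_le_left)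
    rw [h2, sup_bot_eq]
  refine ⟨(a ⊔ c) ⊓ (s ⊔ t), ?_, ?_⟩
  · have ha : a ⊓ ((a ⊔ c) ⊓ (s ⊔ t)) = ⊥ := by
      rw [← inf_assoc, inf_eq_left.2 (le_sup_left : a ≤ a ⊔ c)]
      have h1 : a ⊓ (s ⊔ t) ≤ (s ⊔ t) ⊓ (a ⊔ b) :=
        le_inf inf_le_right (inf_le_left.trans le_sup_left)
      exact le_bot_iff.mp (has ▸ le_inf inf_le_left (h1.trans key1.le))
    have hc : c ⊓ ((a ⊔ c) ⊓ (s ⊔ t)) = ⊥ := by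
      rw [← inf_assoc, inf_eq_left.2 (le_sup_right : c ≤ a ⊔ c)]
      have h1 : c ⊓ (s ⊔ t) ≤ (s ⊔ t) ⊓ (b ⊔ c) :=
        le_inf inf_le_right (inf_le_left.trans le_sup_right)
      exact le_bot_iff.mp (hct ▸ le_inf inf_le_left (h1.trans key2.le))
    rw [ha, hc]
  · have hjoin1 : a ⊔ (s ⊔ t) = a ⊔ (b ⊔ c) := by
      rw [← sup_assoc, hasup, sup_assoc, hbtsup]
    have hjoin2 : c ⊔ (s ⊔ t) = a ⊔ b ⊔ c := by
      rw [sup_comm s t, ← sup_assoc, hctsup, sup_comm b c, sup_assoc, hbsup,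
        sup_comm c (a ⊔ b)]
    have ha : a ⊔ (a ⊔ c) ⊓ (s ⊔ t) = a ⊔ c := by
      rw [inf_comm, ← sup_inf_assoc_of_le (s ⊔ t) (le_sup_left : a ≤ a ⊔ c)]
      have hle : a ⊔ c ≤ a ⊔ (s ⊔ t) := by
        rw [hjoin1]
        exact sup_le le_sup_left (le_sup_of_le_right le_sup_right)
      rw [inf_eq_right.2 hle]
    have hc : c ⊔ (a ⊔ c) ⊓ (s ⊔ t) = a ⊔ c := by
      rw [inf_comm, ← sup_inf_assoc_of_le (s ⊔ t) (le_sup_right : c ≤ a ⊔ c)]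
      have hle : a ⊔ c ≤ c ⊔ (s ⊔ t) := by
        rw [hjoin2]
        exact sup_le (le_sup_of_le_left le_sup_left) le_sup_right
      rw [inf_eq_right.2 hle]
    rw [ha, hc]
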